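/- The probability of the event Erasure_B satisfies ( p(q−K)/(q−1) )^{K} < P(Erasure_B) < p^{K}. -/

import Mathlib

open scoped BigOperators Classical

/-- Number of coordinates of `y` equal to the symbol `a`. -/
def cntY {A : Type*} [DecidableEq A] {K : ℕ} (y : Fin K → A) (a : A) : ℕ :=
  (Finset.univ.filter fun j => y j = a).card

/-- Erasure_A: the coordinates of `y` are pairwise distinct and some coordinate equals `c`. -/
def IsErasureA {A : Type*} {K : ℕ} (c : A) (y : Fin K → A) : Prop :=
  Function.Injective y ∧ ∃ j, y j = c

/-- Erasure_B: the coordinates of `y` are pairwise distinct and no coordinate equals `c`. -/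
def IsErasureB {A : Type*} {K : ℕ} (c : A) (y : Fin K → A) : Prop :=
  Function.Injective y ∧ ∀ j, y j ≠ c

/-- Success: some symbol occurs at least twice, strictly more often than every other symbol,
and that symbol equals `c`. -/
def IsSuccess {A : Type*} [DecidableEq A] {K : ℕ} (c : A) (y : Fin K → A) : Prop :=
  2 ≤ cntY y c ∧ ∀ a, a ≠ c → cntY y a < cntY y c

/-- Error: the complement of Erasure_A ∪ Erasure_B ∪ Success. -/
def IsError {A : Type*} [DecidableEq A] {K : ℕ} (c : A) (y : Fin K → A) : Prop :=
  ¬(IsErasureA c y ∨ IsErasureB c y ∨ IsSuccess c y)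

/-- Probability of the event `E` for a random vector `Y ∈ A^K` with i.i.d. coordinates,
each equal to `c` with probability `1 − p` and equal to each other fixed symbol with
probability `p/(q−1)`. -/
noncomputable def prEvent {A : Type*} [Fintype A] [DecidableEq A] (q K : ℕ) (p : ℝ)
    (c : A) (E : (Fin K → A) → Prop) : ℝ :=
  ∑ y : Fin K → A,
    (∏ j : Fin K, (if y j = c then 1 - p else p / ((q : ℝ) - 1))) *
      (if E y then 1 else 0)

/-- (p(q−K)/(q−1))^K < P(Erasure_B) < p^K. -/

lemma cardB_aux {A : Type*} [Fintype A] [DecidableEq A] {K : ℕ} (c : A) :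
    (Finset.univ.filter fun y : Fin K → A => IsErasureB c y).card =
      (Fintype.card A - 1).descFactorial K := by
  rw [← Fintype.card_subtype]
  have e : {y : Fin K → A // IsErasureB c y} ≃ (Fin K ↪ {a : A // a ≠ c}) :=
    { toFun := fun y => ⟨fun j => ⟨y.1 j, y.2.2 j⟩,
        fun a b h => y.2.1 (congrArg Subtype.val h)⟩
      invFun := fun f => ⟨fun j => (f j).1,
        fun a b h => f.injective (Subtype.ext h), fun j => (f j).2⟩
      left_inv := fun y => rfl
      right_inv := fun f => by ext j; rfl }
  rw [Fintype.card_congr e, Fintype.card_embedding_eq, Fintype.card_fin]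
  congr 1
  have : Fintype.card {a : A // a ≠ c} = Fintype.card A - Fintype.card {a : A // a = c} :=
    Fintype.card_subtype_compl _
  rw [this, Fintype.card_subtype_eq]

lemma prB_aux {A : Type*} [Fintype A] [DecidableEq A] (q K : ℕ) (p : ℝ) (c : A) :
    prEvent q K p c (IsErasureB c) =
    ((Finset.univ.filter fun y : Fin K → A => IsErasureB c y).card : ℝ)
      * (p / ((q : ℝ) - 1)) ^ K := by
  unfold prEvent
  have h : ∀ y : Fin K → A,
      (∏ j : Fin K, (if y j = c then 1 - p else p / ((q : ℝ) - 1))) *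
        (if IsErasureB c y then 1 else 0)
      = if IsErasureB c y then (p / ((q : ℝ) - 1)) ^ K else 0 := by
    intro y
    by_cases hy : IsErasureB c y
    · rw [if_pos hy, if_pos hy, mul_one,
        Finset.prod_congr rfl fun j _ => if_neg (hy.2 j)]
      simp [div_pow]
    · simp [hy]
  rw [Finset.sum_congr rfl fun y _ => h y, Finset.sum_ite, Finset.sum_const,
    Finset.sum_const, smul_zero, add_zero, nsmul_eq_mul]

theorem stmt9 {A : Type*} [Fintype A] [DecidableEq A] (q K : ℕ)
    (hK : 2 ≤ K) (hq : K < q) (p : ℝ) (hp : p ∈ Set.Ioo (0 : ℝ) 1)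
    (hA : Fintype.card A = q) (c : A) :
    (p * ((q : ℝ) - (K : ℝ)) / ((q : ℝ) - 1)) ^ K < prEvent q K p c (IsErasureB c) ∧
    prEvent q K p c (IsErasureB c) < p ^ K := by

  obtain ⟨hp0, hp1⟩ := hp
  have hq1 : (1:ℝ) < (q:ℝ) := by exact_mod_cast lt_of_le_of_lt (by omega : 1 ≤ K) hq
  have hr : 0 < p / ((q:ℝ) - 1) := div_pos hp0 (by linarith)
  set r := p / ((q:ℝ) - 1) with hrdef
  have hpr : prEvent q K p c (IsErasureB c) =
      (((q - 1).descFactorial K : ℕ) : ℝ) * r ^ K := by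
    rw [prB_aux, cardB_aux, hA]
  -- Nat bounds on the descending factorial
  have hdesc : (q - 1).descFactorial K = ∏ i ∈ Finset.range K, (q - 1 - i) := by
    rw [Nat.descFactorial_eq_prod_range]
  have hlow : (q - K) ^ K < (q - 1).descFactorial K := by
    have hc : (q - K) ^ K = ∏ _i ∈ Finset.range K, (q - K) := by
      rw [Finset.prod_const, Finset.card_range]
    rw [hdesc, hc]
    refine Finset.prod_lt_prod (fun i hi => by omega)
      (fun i hi => by simp only [Finset.mem_range] at hi; omega)
      ⟨0, Finset.mem_range.2 (by omega), by omega⟩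
  have hhigh : (q - 1).descFactorial K < (q - 1) ^ K := by
    have hc : (q - 1) ^ K = ∏ _i ∈ Finset.range K, (q - 1) := by
      rw [Finset.prod_const, Finset.card_range]
    rw [hdesc, hc]
    refine Finset.prod_lt_prod (fun i hi => by simp only [Finset.mem_range] at hi; omega)
      (fun i hi => by omega)
      ⟨1, Finset.mem_range.2 (by omega), by omega⟩
  have hrK : 0 < r ^ K := pow_pos hr K
  constructor
  · have : (p * ((q:ℝ) - K) / ((q:ℝ) - 1)) ^ K = (((q - K : ℕ):ℝ)) ^ K * r ^ K := by
      rw [← mul_pow]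
      congr 1
      have : ((q - K : ℕ):ℝ) = (q:ℝ) - K := by
        push_cast [Nat.cast_sub hq.le]; ring
      rw [this, hrdef]; ring
    rw [this, hpr]
    apply mul_lt_mul_of_pos_right _ hrK
    calc (((q - K : ℕ):ℝ)) ^ K = (((q - K) ^ K : ℕ) : ℝ) := by push_cast; ring
    _ < _ := by exact_mod_cast hlow
  · have hpow : p ^ K = (((q - 1 : ℕ):ℝ)) ^ K * r ^ K := by
      rw [← mul_pow]
      congr 1
      have h1 : ((q - 1 : ℕ):ℝ) = (q:ℝ) - 1 := by
        push_cast [Nat.cast_sub (by omega : 1 ≤ q)]; ring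
      rw [h1, hrdef, mul_comm, div_mul_cancel₀ p (by linarith : (q:ℝ) - 1 ≠ 0)]
    rw [hpow, hpr]
    apply mul_lt_mul_of_pos_right _ hrK
    calc (((q - 1).descFactorial K : ℕ) : ℝ) < (((q-1)^K : ℕ) : ℝ) := by exact_mod_cast hhigh
    _ = _ := by push_cast; ring
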